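/- Let H be a complex Hilbert space with inner product ⟪·,·⟫ conjugate-linear in the first argument. Let S be a subset of H and f : H → H a map such that ⟪f x, f y⟫ = ⟪y, x⟫ for all x, y ∈ S, and suppose the topological closure of the ℂ-linear span of S is all of H. Then there exists a unique map J : H → H that is additive, conjugate-homogeneous (J (c • x) = conj(c) • (J x) for all c ∈ ℂ, x ∈ H), norm-preserving (‖J x‖ = ‖x‖ for all x ∈ H), and satisfies J x = f x for every x ∈ S; moreover this J satisfies ⟪J x, J y⟫ = ⟪y, x⟫ for all x, y ∈ H. -/

import Mathlib

open scoped InnerProductSpace ComplexConjugate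

/-- Extension principle for antilinear isometries: a map `f` defined on a total
subset `S` of `H` satisfying `⟪f x, f y⟫ = ⟪y, x⟫` on `S` extends uniquely to an
additive, conjugate-homogeneous, norm-preserving map `J : H → H`, and this
extension satisfies `⟪J x, J y⟫ = ⟪y, x⟫` on all of `H`. -/
theorem stmt7 {H : Type*} [NormedAddCommGroup H] [InnerProductSpace ℂ H] [CompleteSpace H]
    (S : Set H) (f : H → H)
    (hf : ∀ x ∈ S, ∀ y ∈ S, ⟪f x, f y⟫_ℂ = ⟪y, x⟫_ℂ)
    (htotal : (Submodule.span ℂ S).topologicalClosure = ⊤) :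
    ∃ J : H → H,
      ((∀ x y : H, J (x + y) = J x + J y) ∧
        (∀ (c : ℂ) (x : H), J (c • x) = conj c • J x) ∧
        (∀ x : H, ‖J x‖ = ‖x‖) ∧
        (∀ x ∈ S, J x = f x)) ∧
      (∀ x y : H, ⟪J x, J y⟫_ℂ = ⟪y, x⟫_ℂ) ∧
      (∀ J' : H → H,
        ((∀ x y : H, J' (x + y) = J' x + J' y) ∧
          (∀ (c : ℂ) (x : H), J' (c • x) = conj c • J' x) ∧
          (∀ x : H, ‖J' x‖ = ‖x‖) ∧
          (∀ x ∈ S, J' x = f x)) → J' = J) := by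
  set D := StrongDual ℂ H
  set td := InnerProductSpace.toDual ℂ H with htd
  set T : (↥S →₀ ℂ) →ₗ[ℂ] H := Finsupp.linearCombination ℂ (fun s : S => (s : H)) with hT
  set T' : (↥S →₀ ℂ) →ₗ[ℂ] D := Finsupp.linearCombination ℂ (fun s : S => td (f s)) with hT'
  have hsymm : ∀ l : ↥S →₀ ℂ, td.symm (T' l) = ∑ s ∈ l.support, conj (l s) • f s := by
    intro l
    rw [hT', Finsupp.linearCombination_apply, Finsupp.sum, map_sum]
    refine Finset.sum_congr rfl fun s _ => ?_
    rw [LinearIsometryEquiv.map_smulₛₗ, LinearIsometryEquiv.symm_apply_apply]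
  have hTsum : ∀ l : ↥S →₀ ℂ, T l = ∑ s ∈ l.support, (l s) • (s : H) := by
    intro l; rw [hT, Finsupp.linearCombination_apply, Finsupp.sum]
  have key : ∀ l l' : ↥S →₀ ℂ, ⟪td.symm (T' l), td.symm (T' l')⟫_ℂ = ⟪T l', T l⟫_ℂ := by
    intro l l'
    rw [hsymm, hsymm, hTsum, hTsum, sum_inner, sum_inner]
    simp only [inner_sum]
    rw [Finset.sum_comm]
    refine Finset.sum_congr rfl fun t _ => Finset.sum_congr rfl fun s _ => ?_
    rw [inner_smul_left, inner_smul_left, inner_smul_right, inner_smul_right,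
      hf _ s.2 _ t.2]
    simp only [Complex.conj_conj, RingHom.id_apply]
    ring
  -- kernel inclusion
  have hker : LinearMap.ker T ≤ LinearMap.ker T' := by
    intro l hl
    rw [LinearMap.mem_ker] at hl ⊢
    have h1 := key l l
    rw [hl, inner_zero_left] at h1
    have h2 : td.symm (T' l) = 0 := inner_self_eq_zero.mp h1
    have := congrArg td h2
    rwa [LinearIsometryEquiv.apply_symm_apply, map_zero] at this
  set M := Submodule.span ℂ S with hM
  have eq1 : LinearMap.range T = M := by
    rw [hT, Finsupp.range_linearCombination, Subtype.range_coe]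
  set L : M →ₗ[ℂ] D :=
    ((LinearMap.ker T).liftQ T' hker) ∘ₗ
      (T.quotKerEquivRange.symm.toLinearMap ∘ₗ (LinearEquiv.ofEq M (LinearMap.range T) eq1.symm).toLinearMap)
    with hL
  have hLval : ∀ (l : ↥S →₀ ℂ) (v : M), (v : H) = T l → L v = T' l := by
    intro l v hv
    have hmem : T l ∈ LinearMap.range T := LinearMap.mem_range_self _ _
    have hE : (LinearEquiv.ofEq M (LinearMap.range T) eq1.symm) v = ⟨T l, hmem⟩ :=
      Subtype.ext hv
    have hq : T.quotKerEquivRange.symm ⟨T l, hmem⟩ = Submodule.Quotient.mk l := by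
      rw [LinearEquiv.symm_apply_eq]
      exact Subtype.ext (T.quotKerEquivRange_apply_mk l)
    rw [hL]
    simp only [LinearMap.comp_apply, LinearEquiv.coe_coe, hE, hq]
    exact Submodule.liftQ_apply _ _ _
  have hsurj : ∀ v : M, ∃ l : ↥S →₀ ℂ, (v : H) = T l := by
    intro v
    have : (v : H) ∈ LinearMap.range T := by rw [eq1]; exact v.2
    obtain ⟨l, hl⟩ := this
    exact ⟨l, hl.symm⟩
  -- inner product preservation on the span
  have hg_inner : ∀ v w : M, ⟪td.symm (L v), td.symm (L w)⟫_ℂ = ⟪(w : H), (v : H)⟫_ℂ := by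
    intro v w
    obtain ⟨l, hl⟩ := hsurj v
    obtain ⟨l', hl'⟩ := hsurj w
    rw [hLval l v hl, hLval l' w hl', key, ← hl, ← hl']
  have hnormsq : ∀ {a b : H}, ⟪a, a⟫_ℂ = ⟪b, b⟫_ℂ → ‖a‖ = ‖b‖ := by
    intro a b hab
    rw [inner_self_eq_norm_sq_to_K, inner_self_eq_norm_sq_to_K] at hab
    have : (‖a‖ : ℝ) ^ 2 = (‖b‖ : ℝ) ^ 2 := by exact_mod_cast hab
    have := congrArg Real.sqrt this
    rwa [Real.sqrt_sq (norm_nonneg _), Real.sqrt_sq (norm_nonneg _)] at this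
  have hLnorm : ∀ v : M, ‖L v‖ = ‖v‖ := by
    intro v
    have h1 : ‖L v‖ = ‖td.symm (L v)‖ := (LinearIsometryEquiv.norm_map _ _).symm
    rw [h1]
    exact hnormsq (hg_inner v v)
  set LI : M →ₗᵢ[ℂ] D := ⟨L, hLnorm⟩ with hLI
  set e : M →L[ℂ] H := M.subtypeL with he
  have hDense : Dense (M : Set H) := Submodule.dense_iff_topologicalClosure_eq_top.mpr htotal
  have hd : DenseRange (⇑e) := by
    have : Set.range (⇑e) = (M : Set H) := Subtype.range_coe
    rw [DenseRange, this]; exact hDense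
  have h_e : IsUniformInducing (⇑e) := (isometry_subtype_coe).isUniformInducing
  set G : H →L[ℂ] D := ContinuousLinearMap.extend LI.toContinuousLinearMap e with hG
  have hGe : ∀ v : M, G (e v) = L v := fun v =>
    ContinuousLinearMap.extend_eq LI.toContinuousLinearMap hd h_e v
  set J : H → H := fun x => td.symm (G x) with hJ
  have hJcont : Continuous J := td.symm.continuous.comp G.continuous
  have hJe : ∀ v : M, J (v : H) = td.symm (L v) := by
    intro v
    have : (v : H) = e v := rfl
    rw [hJ]; simp only; rw [this, hGe]
  -- the four basic properties
  have hadd : ∀ x y : H, J (x + y) = J x + J y := by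
    intro x y; rw [hJ]; simp only; rw [map_add, map_add]
  have hsmul : ∀ (c : ℂ) (x : H), J (c • x) = conj c • J x := by
    intro c x; rw [hJ]; simp only
    rw [map_smul, LinearIsometryEquiv.map_smulₛₗ]
  have hOnS : ∀ x ∈ S, J x = f x := by
    intro x hx
    have hv : x ∈ M := Submodule.subset_span hx
    have h1 : J x = td.symm (L ⟨x, hv⟩) := hJe ⟨x, hv⟩
    have h2 : L ⟨x, hv⟩ = T' (Finsupp.single ⟨x, hx⟩ 1) := by
      refine hLval _ _ ?_
      rw [hT]; simp [Finsupp.linearCombination_single]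
    have h3 : T' (Finsupp.single ⟨x, hx⟩ 1) = td (f x) := by
      rw [hT']; simp [Finsupp.linearCombination_single]
    rw [h1, h2, h3, LinearIsometryEquiv.symm_apply_apply]
  -- inner product preservation everywhere
  have hinner : ∀ x y : H, ⟪J x, J y⟫_ℂ = ⟪y, x⟫_ℂ := by
    have c1 : Continuous fun p : H × H => ⟪J p.1, J p.2⟫_ℂ :=
      Continuous.inner (hJcont.comp continuous_fst) (hJcont.comp continuous_snd)
    have c2 : Continuous fun p : H × H => ⟪p.2, p.1⟫_ℂ :=
      Continuous.inner continuous_snd continuous_fst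
    have hdp : Dense ((M : Set H) ×ˢ (M : Set H)) := hDense.prod hDense
    have heq : Set.EqOn (fun p : H × H => ⟪J p.1, J p.2⟫_ℂ) (fun p : H × H => ⟪p.2, p.1⟫_ℂ)
        ((M : Set H) ×ˢ (M : Set H)) := by
      rintro ⟨x, y⟩ ⟨hx, hy⟩
      simp only
      rw [show x = ((⟨x, hx⟩ : M) : H) from rfl, show y = ((⟨y, hy⟩ : M) : H) from rfl,
        hJe, hJe]
      exact hg_inner _ _
    have := Continuous.ext_on hdp c1 c2 heq
    intro x y
    exact congrFun this (x, y)
  have hnorm : ∀ x : H, ‖J x‖ = ‖x‖ := fun x => hnormsq (hinner x x)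
  refine ⟨J, ⟨hadd, hsmul, hnorm, hOnS⟩, hinner, ?_⟩
  -- uniqueness
  rintro J' ⟨hadd', hsmul', hnorm', hOnS'⟩
  have hneg' : ∀ x : H, J' (-x) = -(J' x) := by
    intro x
    have := hsmul' (-1) x
    simpa using this
  have hcont' : Continuous J' := by
    have : Isometry J' := by
      refine Isometry.of_dist_eq fun x y => ?_
      rw [dist_eq_norm, dist_eq_norm]
      have : J' x - J' y = J' (x - y) := by
        rw [sub_eq_add_neg, sub_eq_add_neg, hadd', hneg']
      rw [this, hnorm']
    exact this.continuous
  have hclosed : IsClosed {x : H | J' x = J x} := isClosed_eq hcont' hJcont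
  have hspan : (M : Set H) ⊆ {x : H | J' x = J x} := by
    intro x hx
    induction hx using Submodule.span_induction with
    | mem x hx => simp only [Set.mem_setOf_eq]; rw [hOnS' x hx, hOnS x hx]
    | zero =>
      have h0 : ∀ (K : H → H), (∀ (c : ℂ) (x : H), K (c • x) = conj c • K x) → K 0 = 0 := by
        intro K hK
        have := hK 0 0
        simpa using this
      simp only [Set.mem_setOf_eq]
      rw [h0 J' hsmul', h0 J hsmul]
    | add a b _ _ ha hb =>
      simp only [Set.mem_setOf_eq] at ha hb ⊢
      rw [hadd', hadd, ha, hb]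
    | smul c a _ ha =>
      simp only [Set.mem_setOf_eq] at ha ⊢
      rw [hsmul', hsmul, ha]
  have : Set.univ ⊆ {x : H | J' x = J x} := by
    have h1 : closure (M : Set H) = Set.univ := hDense.closure_eq
    rw [← h1]
    exact hclosed.closure_subset_iff.mpr hspan
  funext x
  exact this (Set.mem_univ x)
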